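/- Let E and F be Banach lattices and T : E → F a disjointness preserving linear operator. If u = v + w with |v| ∧ |w| = 0, then ‖T(v)‖ ≤ ‖T(u)‖. -/

import Mathlib

variable {E F : Type*}
  [NormedAddCommGroup E] [Lattice E] [HasSolidNorm E] [IsOrderedAddMonoid E] [NormedSpace ℝ E] [CompleteSpace E]
  [NormedAddCommGroup F] [Lattice F] [HasSolidNorm F] [IsOrderedAddMonoid F] [NormedSpace ℝ F] [CompleteSpace F]

private lemma inf_add_le_aux {α : Type*} [Lattice α] [AddCommGroup α]
    [CovariantClass α α (· + ·) (· ≤ ·)] {a b c : α} (ha : 0 ≤ a) (hb : 0 ≤ b) (hc : 0 ≤ c) :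
    a ⊓ (b + c) ≤ a ⊓ b + a ⊓ c := by
  set t := a ⊓ (b + c) with ht
  have h1 : t - (a ⊓ b) ≤ a ⊓ c := by
    rw [sub_inf]
    apply sup_le
    · refine le_inf ?_ ?_
      · calc t - a ≤ 0 := sub_nonpos.2 inf_le_left
        _ ≤ a := ha
      · calc t - a ≤ 0 := sub_nonpos.2 inf_le_left
        _ ≤ c := hc
    · refine le_inf ?_ ?_
      · calc t - b ≤ a - b := sub_le_sub_right inf_le_left _
        _ ≤ a := by simpa using hb
      · exact sub_le_iff_le_add'.2 inf_le_right
  have := sub_le_iff_le_add.1 h1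
  rwa [add_comm] at this

/-- If `T` is disjointness preserving and `u = v + w` with `v ⊥ w`, then `‖Tv‖ ≤ ‖Tu‖`. -/
theorem norm_le_of_disjoint_summand (T : E →ₗ[ℝ] F)
    (hdp : ∀ x y : E, |x| ⊓ |y| = 0 → |T x| ⊓ |T y| = 0)
    (u v w : E) (huvw : u = v + w) (hvw : |v| ⊓ |w| = 0) :
    ‖T v‖ ≤ ‖T u‖ := by
  have hTvw : |T v| ⊓ |T w| = 0 := hdp v w hvw
  have hTu : T u = T v + T w := by rw [huvw, map_add]
  have hle : |T v| ≤ |T u| + |T w| := by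
    have : T v = T u - T w := by rw [hTu]; abel
    rw [this, sub_eq_add_neg]
    exact (abs_add_le (T u) (-T w)).trans (by rw [abs_neg])
  have key : |T v| ≤ |T u| := by
    have h1 : |T v| = |T v| ⊓ (|T u| + |T w|) := (inf_eq_left.2 hle).symm
    calc |T v| = |T v| ⊓ (|T u| + |T w|) := h1
    _ ≤ |T v| ⊓ |T u| + |T v| ⊓ |T w| :=
        inf_add_le_aux (abs_nonneg _) (abs_nonneg _) (abs_nonneg _)
    _ = |T v| ⊓ |T u| := by rw [hTvw, add_zero]
    _ ≤ |T u| := inf_le_right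
  exact HasSolidNorm.solid (by simpa using key)
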